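/- Let S = conv(X₁, …, X_N) be a conditional simplex in (L⁰)^d with barycentric subdivision (C_π)_{π ∈ S_N}. Then σ(⋃_{π ∈ S_N} C_π) = S. -/

import Mathlib

open MeasureTheory Filter

noncomputable section

variable {Ω : Type*} [MeasurableSpace Ω]

/-- `L⁰(Ω,𝒜,P)`: equivalence classes of real-valued measurable functions modulo
`P`-almost-sure equality. -/
abbrev L0 (P : Measure Ω) : Type _ := Ω →ₘ[P] ℝ

namespace L0

variable (P : Measure Ω)

/-- The indicator `1_A` of a measurable set as an element of `L⁰`. -/
def ind (A : Set Ω) : L0 P :=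
  letI := Classical.dec (MeasurableSet A)
  if h : MeasurableSet A then
    AEEqFun.mk (A.indicator fun _ => (1 : ℝ)) (aestronglyMeasurable_const.indicator h)
  else 0

/-- A partition: a countable family of measurable sets, pairwise disjoint up to null
sets, covering `Ω` up to a null set. -/
structure IsPartition (A : ℕ → Set Ω) : Prop where
  meas : ∀ i, MeasurableSet (A i)
  disj : ∀ i j, i ≠ j → P (A i ∩ A j) = 0
  full : P (⋃ i, A i) = 1

/-- `Z = Σᵢ 1_{Aᵢ} Xᵢ` in `L⁰`: `Z` agrees with `Xᵢ` on `Aᵢ`, i.e. `1_{Aᵢ}·Z = 1_{Aᵢ}·Xᵢ`. -/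
def IsGluing1 (A : ℕ → Set Ω) (X : ℕ → L0 P) (Z : L0 P) : Prop :=
  ∀ i, ind P (A i) * Z = ind P (A i) * X i

/-- `Z = Σᵢ 1_{Aᵢ} Xᵢ` in `(L⁰)^d`. -/
def IsGluing {d : ℕ} (A : ℕ → Set Ω) (X : ℕ → Fin d → L0 P) (Z : Fin d → L0 P) : Prop :=
  ∀ k, IsGluing1 P A (fun i => X i k) (Z k)

/-- The σ-stable hull `σ(𝒞)` of a set `𝒞 ⊆ (L⁰)^d`. -/
def sigmaHull {d : ℕ} (C : Set (Fin d → L0 P)) : Set (Fin d → L0 P) :=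
  {Z | ∃ (A : ℕ → Set Ω) (X : ℕ → Fin d → L0 P),
    IsPartition P A ∧ (∀ i, X i ∈ C) ∧ IsGluing P A X Z}

/-- A function `f` defined (at least) on a σ-stable set `C ⊆ (L⁰)^d` is local if
`f(Σᵢ 1_{Aᵢ} Xᵢ) = Σᵢ 1_{Aᵢ} f(Xᵢ)` for every partition `(Aᵢ)` and family `(Xᵢ)` in `C`. -/
def IsLocal {d e : ℕ} (C : Set (Fin d → L0 P)) (f : (Fin d → L0 P) → (Fin e → L0 P)) : Prop :=
  ∀ (A : ℕ → Set Ω) (X : ℕ → Fin d → L0 P) (Z : Fin d → L0 P),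
    IsPartition P A → (∀ i, X i ∈ C) → Z ∈ C → IsGluing P A X Z →
    IsGluing P A (fun i => f (X i)) (f Z)

/-- Locality for functions with values in `L⁰`. -/
def IsLocalScalar {d : ℕ} (C : Set (Fin d → L0 P)) (f : (Fin d → L0 P) → L0 P) : Prop :=
  ∀ (A : ℕ → Set Ω) (X : ℕ → Fin d → L0 P) (Z : Fin d → L0 P),
    IsPartition P A → (∀ i, X i ∈ C) → Z ∈ C → IsGluing P A X Z →
    IsGluing1 P A (fun i => f (X i)) (f Z)

/-- Locality for functions from `L⁰` to `L⁰`. -/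
def IsLocal1 (C : Set (L0 P)) (f : L0 P → L0 P) : Prop :=
  ∀ (A : ℕ → Set Ω) (X : ℕ → L0 P) (Z : L0 P),
    IsPartition P A → (∀ i, X i ∈ C) → Z ∈ C → IsGluing1 P A X Z →
    IsGluing1 P A (fun i => f (X i)) (f Z)

/-- `P`-almost sure convergence of a sequence in `L⁰`. -/
def TendstoAS (X : ℕ → L0 P) (Y : L0 P) : Prop :=
  ∀ᵐ ω ∂P, Tendsto (fun n => X n ω) atTop (nhds (Y ω))

/-- `P`-almost sure convergence of a sequence in `(L⁰)^d`. -/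
def TendstoASd {d : ℕ} (X : ℕ → Fin d → L0 P) (Y : Fin d → L0 P) : Prop :=
  ∀ k, TendstoAS P (fun n => X n k) (Y k)

/-- Sequential continuity (w.r.t. `P`-a.s. convergence) of `f` on `C ⊆ (L⁰)^d`. -/
def SeqContinuous {d e : ℕ} (C : Set (Fin d → L0 P)) (f : (Fin d → L0 P) → (Fin e → L0 P)) :
    Prop :=
  ∀ (X : ℕ → Fin d → L0 P) (Y : Fin d → L0 P), (∀ n, X n ∈ C) → Y ∈ C →
    TendstoASd P X Y → TendstoASd P (fun n => f (X n)) (f Y)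

/-- Sequential continuity for functions from `L⁰` to `L⁰`. -/
def SeqContinuous1 (C : Set (L0 P)) (f : L0 P → L0 P) : Prop :=
  ∀ (X : ℕ → L0 P) (Y : L0 P), (∀ n, X n ∈ C) → Y ∈ C →
    TendstoAS P X Y → TendstoAS P (fun n => f (X n)) (f Y)

/-- The `L⁰`-convex hull `conv(X₁,…,X_N)` of a finite family in `(L⁰)^d`. -/
def conv {d : ℕ} {ι : Type*} [Fintype ι] (X : ι → Fin d → L0 P) : Set (Fin d → L0 P) :=
  {Y | ∃ lam : ι → L0 P, (∀ i, 0 ≤ lam i) ∧ (∑ i, lam i) = 1 ∧ Y = ∑ i, lam i • X i}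

/-- The affine hull `aff(X₁,…,X_N)` of a finite family in `(L⁰)^d`. -/
def aff {d : ℕ} {ι : Type*} [Fintype ι] (X : ι → Fin d → L0 P) : Set (Fin d → L0 P) :=
  {Y | ∃ lam : ι → L0 P, (∑ i, lam i) = 1 ∧ Y = ∑ i, lam i • X i}

/-- Affine independence of `X₁,…,X_N` in `(L⁰)^d`: either `N = 1`, or `N > 1` and
`Σᵢ₌₁^{N−1} λᵢ (Xᵢ − X_N) = 0` implies `λ₁ = ⋯ = λ_{N−1} = 0`. -/
def AffInd {d : ℕ} : {N : ℕ} → (X : Fin N → Fin d → L0 P) → Prop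
  | 0, _ => False
  | 1, _ => True
  | (m + 2), X => ∀ lam : Fin (m + 1) → L0 P,
      (∑ i : Fin (m + 1), lam i • (X i.castSucc - X (Fin.last (m + 1)))) = 0 → ∀ i, lam i = 0

/-- The `L⁰`-scalar product on `(L⁰)^d`. -/
def inner {d : ℕ} (X Y : Fin d → L0 P) : L0 P := ∑ k, X k * Y k

/-- The `L⁰`-norm on `(L⁰)^d`. -/
def norm {d : ℕ} (X : Fin d → L0 P) : L0 P :=
  AEEqFun.comp Real.sqrt Real.continuous_sqrt (inner P X X)

/-- `D` is the essential supremum (least upper bound in the `P`-a.s. order) of a set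
`F ⊆ L⁰`. -/
def IsEssSup (F : Set (L0 P)) (D : L0 P) : Prop :=
  (∀ X ∈ F, X ≤ D) ∧ ∀ D' : L0 P, (∀ X ∈ F, X ≤ D') → D ≤ D'

/-- `𝒞 ⊆ (L⁰)^d` is bounded if `esssup_{X ∈ 𝒞} ‖X‖` belongs to `L⁰`. -/
def Bounded {d : ℕ} (C : Set (Fin d → L0 P)) : Prop :=
  ∃ b : L0 P, ∀ X ∈ C, norm P X ≤ b

/-- `𝒞 ⊆ (L⁰)^d` is sequentially closed if it contains all `P`-a.s. limits of its
sequences. -/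
def SeqClosed {d : ℕ} (C : Set (Fin d → L0 P)) : Prop :=
  ∀ (X : ℕ → Fin d → L0 P) (Y : Fin d → L0 P), (∀ n, X n ∈ C) → TendstoASd P X Y → Y ∈ C

/-- `L⁰`-convexity of a subset of `(L⁰)^d`. -/
def L0Convex {d : ℕ} (C : Set (Fin d → L0 P)) : Prop :=
  ∀ X ∈ C, ∀ Y ∈ C, ∀ lam : L0 P, 0 ≤ lam → lam ≤ 1 → lam • X + (1 - lam) • Y ∈ C

/-- The vertices `Y_k^π = (1/k) Σᵢ₌₁ᵏ X_{π(i)}` of the member `C_π` of the barycentric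
subdivision (0-based: `bary P X π k = (1/(k+1)) Σ_{i ≤ k} X_{π(i)}`). -/
def bary {d N : ℕ} (X : Fin N → Fin d → L0 P) (π : Equiv.Perm (Fin N)) (k : Fin N) :
    Fin d → L0 P :=
  ((k.1 + 1 : ℝ)⁻¹) • ∑ i ∈ Finset.univ.filter (· ≤ k), X (π i)

end L0

end


section StmtAuxSection
namespace StmtAux
open MeasureTheory Filter L0

open L0
variable {Ω : Type*} [MeasurableSpace Ω] {P : Measure Ω}

lemma ind_eq_mk {A : Set Ω} (hA : MeasurableSet A) :
    L0.ind P A = AEEqFun.mk (A.indicator fun _ => (1 : ℝ))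
      (aestronglyMeasurable_const.indicator hA) := by
  unfold L0.ind
  rw [dif_pos hA]

lemma aeInd {A : Set Ω} (hA : MeasurableSet A) :
    ∀ᵐ ω ∂P, (L0.ind P A) ω = A.indicator (fun _ => (1:ℝ)) ω := by
  rw [ind_eq_mk hA]; exact AEEqFun.coeFn_mk _ _

lemma aeMul (f g : L0 P) : ∀ᵐ ω ∂P, (f * g) ω = f ω * g ω := AEEqFun.coeFn_mul f g
lemma aeAdd (f g : L0 P) : ∀ᵐ ω ∂P, (f + g) ω = f ω + g ω := AEEqFun.coeFn_add f g
lemma aeSub (f g : L0 P) : ∀ᵐ ω ∂P, (f - g) ω = f ω - g ω := AEEqFun.coeFn_sub f g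
lemma aeOne : ∀ᵐ ω ∂P, (1 : L0 P) ω = 1 := AEEqFun.coeFn_one
lemma aeZero : ∀ᵐ ω ∂P, (0 : L0 P) ω = 0 := AEEqFun.coeFn_zero
lemma aeSmul (c : ℝ) (f : L0 P) : ∀ᵐ ω ∂P, (c • f) ω = c * f ω := AEEqFun.coeFn_smul c f

lemma eq_iff {f g : L0 P} : f = g ↔ ∀ᵐ ω ∂P, f ω = g ω :=
  ⟨fun h => h ▸ Filter.EventuallyEq.refl _ _, AEEqFun.ext⟩

lemma le_iff {f g : L0 P} : f ≤ g ↔ ∀ᵐ ω ∂P, f ω ≤ g ω := AEEqFun.coeFn_le.symm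

lemma aeSum {ι : Type*} (s : Finset ι) (f : ι → L0 P) :
    ∀ᵐ ω ∂P, (∑ i ∈ s, f i) ω = ∑ i ∈ s, f i ω := by
  classical
  induction s using Finset.cons_induction with
  | empty => simpa using (aeZero (P := P))
  | cons a s ha ih =>
      simp only [Finset.sum_cons]
      filter_upwards [aeAdd (f a) (∑ i ∈ s, f i), ih] with ω h1 h2
      rw [h1, h2]

lemma ind_mul_eq_iff {A : Set Ω} (hA : MeasurableSet A) {U V : L0 P} :
    L0.ind P A * U = L0.ind P A * V ↔ ∀ᵐ ω ∂P, ω ∈ A → U ω = V ω := by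
  rw [eq_iff]
  constructor
  · intro h
    filter_upwards [h, aeMul (L0.ind P A) U, aeMul (L0.ind P A) V, aeInd hA]
      with ω h0 h1 h2 h3 hmem
    rw [h1, h2, h3, Set.indicator_of_mem hmem, one_mul, one_mul] at h0
    exact h0
  · intro h
    filter_upwards [h, aeMul (L0.ind P A) U, aeMul (L0.ind P A) V, aeInd hA]
      with ω h0 h1 h2 h3
    rw [h1, h2, h3]
    by_cases hm : ω ∈ A
    · rw [Set.indicator_of_mem hm, one_mul, one_mul, h0 hm]
    · rw [Set.indicator_of_notMem hm, zero_mul, zero_mul]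

lemma ae_mem_iUnion {A : ℕ → Set Ω} [IsProbabilityMeasure P] (hA : IsPartition P A) :
    ∀ᵐ ω ∂P, ω ∈ ⋃ i, A i := by
  refine mem_ae_iff.2 ?_
  show P (⋃ i, A i)ᶜ = 0
  rw [measure_compl (MeasurableSet.iUnion hA.meas) (measure_ne_top _ _), measure_univ, hA.full]
  simp

lemma ae_partition {A : ℕ → Set Ω} [IsProbabilityMeasure P] (hA : IsPartition P A)
    {p : Ω → Prop} (h : ∀ i, ∀ᵐ ω ∂P, ω ∈ A i → p ω) : ∀ᵐ ω ∂P, p ω := by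
  filter_upwards [ae_mem_iUnion hA, ae_all_iff.2 h] with ω hmem hall
  obtain ⟨i, hi⟩ := Set.mem_iUnion.1 hmem
  exact hall i hi

lemma glue_eq {A : ℕ → Set Ω} [IsProbabilityMeasure P] (hA : IsPartition P A) {U V : L0 P}
    (h : ∀ i, L0.ind P (A i) * U = L0.ind P (A i) * V) : U = V := by
  refine AEEqFun.ext (ae_partition hA (p := fun ω => U ω = V ω) ?_)
  exact fun i => (ind_mul_eq_iff (hA.meas i)).1 (h i)

lemma exists_glue {A : ℕ → Set Ω} (hA : IsPartition P A) (f : ℕ → L0 P) :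
    ∃ g : L0 P, IsGluing1 P A f g := by
  classical
  set D : ℕ → Set Ω := fun i => A i \ ⋃ (j : ℕ) (_ : j < i), A j with hD
  have hDmeas : ∀ i, MeasurableSet (D i) := fun i =>
    (hA.meas i).diff (MeasurableSet.iUnion fun j => MeasurableSet.iUnion fun _ => hA.meas j)
  have key : ∀ i j, i < j → ∀ ω, ω ∈ D i → ω ∉ D j := by
    intro i j hij ω hi hj
    exact hj.2 (Set.mem_iUnion.2 ⟨i, Set.mem_iUnion.2 ⟨hij, hi.1⟩⟩)
  have hDd : ∀ i j, j ≠ i → ∀ ω, ω ∈ D i → ω ∉ D j := by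
    intro i j hij ω hi hj
    rcases lt_or_gt_of_ne hij with h | h
    · exact key j i h ω hj hi
    · exact key i j h ω hi hj
  set F : ℕ → Ω → ℝ := fun i => ⇑(f i) with hF
  set G : Ω → ℝ := fun ω => ∑' i, (D i).indicator (F i) ω with hG
  have hsum : ∀ ω, Summable (fun i => (D i).indicator (F i) ω) := by
    intro ω
    by_cases h : ∃ i, ω ∈ D i
    · obtain ⟨i, hi⟩ := h
      refine summable_of_ne_finset_zero (s := {i}) ?_
      intro b hb
      have hb' : b ≠ i := by simpa using hb
      exact Set.indicator_of_notMem (hDd i b hb' ω hi) _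
    · refine summable_of_ne_finset_zero (s := ∅) ?_
      intro b _
      exact Set.indicator_of_notMem (fun hm => h ⟨b, hm⟩) _
  have hGmeas : Measurable G := by
    refine measurable_of_tendsto_metrizable
      (f := fun n ω => ∑ i ∈ Finset.range n, (D i).indicator (F i) ω)
      (fun n => Finset.measurable_sum _ fun i _ => ((f i).measurable).indicator (hDmeas i)) ?_
    exact tendsto_pi_nhds.2 fun ω => (hsum ω).hasSum.tendsto_sum_nat
  refine ⟨AEEqFun.mk G hGmeas.aestronglyMeasurable, ?_⟩
  intro i
  rw [ind_mul_eq_iff (hA.meas i)]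
  have hnull : P (A i \ D i) = 0 := by
    have hsub : A i \ D i ⊆ ⋃ (j : ℕ) (_ : j < i), (A i ∩ A j) := by
      intro ω hω
      have hm : ω ∈ ⋃ (j : ℕ) (_ : j < i), A j := by
        by_contra hc; exact hω.2 ⟨hω.1, hc⟩
      obtain ⟨j, hj, hmem⟩ := Set.mem_iUnion₂.1 hm
      exact Set.mem_iUnion₂.2 ⟨j, hj, hω.1, hmem⟩
    refine measure_mono_null hsub ?_
    exact measure_iUnion_null fun j => measure_iUnion_null fun hj => hA.disj i j (Nat.ne_of_gt hj)
  have hae : ∀ᵐ ω ∂P, ω ∉ A i \ D i := (measure_eq_zero_iff_ae_notMem).1 hnull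
  filter_upwards [hae, AEEqFun.coeFn_mk G hGmeas.aestronglyMeasurable] with ω h1 h2 hmem
  have hDi : ω ∈ D i := by
    by_contra hc; exact h1 ⟨hmem, hc⟩
  rw [h2]
  have : G ω = (D i).indicator (F i) ω :=
    tsum_eq_single i fun j hj => Set.indicator_of_notMem (hDd i j hj ω hDi) _
  rw [this, Set.indicator_of_mem hDi]



lemma abel_aux (a x : ℕ → ℝ) (n : ℕ) :
    ∑ k ∈ Finset.range n, (a k - a (k+1)) * (∑ i ∈ Finset.range (k+1), x i)
      = ∑ k ∈ Finset.range n, a k * x k - a n * ∑ i ∈ Finset.range n, x i := by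
  induction n with
  | zero => simp
  | succ n ih =>
    rw [Finset.sum_range_succ, ih, Finset.sum_range_succ (f := fun k => a k * x k),
        Finset.sum_range_succ (f := x)]
    ring

lemma sum_filter_le {M : Type*} [AddCommMonoid M] {N : ℕ} (k : Fin N) (f : Fin N → M)
    (g : ℕ → M) (hg : ∀ i : Fin N, g i.1 = f i) :
    ∑ i ∈ Finset.univ.filter (· ≤ k), f i = ∑ i ∈ Finset.range (k.1+1), g i := by
  classical
  have h1 : ∑ i ∈ Finset.univ.filter (· ≤ k), f i
      = ∑ i : Fin N, if i ≤ k then f i else 0 := by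
    rw [Finset.sum_filter]
  have h2 : (∑ i : Fin N, if i ≤ k then f i else 0)
      = ∑ i ∈ Finset.range N, (if i ≤ k.1 then g i else 0) := by
    rw [← Fin.sum_univ_eq_sum_range]
    refine Finset.sum_congr rfl fun i _ => ?_
    rw [hg i]
    congr 1
  have h3 : (∑ i ∈ Finset.range N, if i ≤ k.1 then g i else 0)
      = ∑ i ∈ Finset.range (k.1+1), (if i ≤ k.1 then g i else 0) := by
    refine (Finset.sum_subset ?_ ?_).symm
    · exact Finset.range_subset_range.2 k.2
    · intro m _ hm
      simp only [Finset.mem_range, not_lt] at hm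
      rw [if_neg (by omega)]
  have h4 : (∑ i ∈ Finset.range (k.1+1), if i ≤ k.1 then g i else 0)
      = ∑ i ∈ Finset.range (k.1+1), g i := by
    refine Finset.sum_congr rfl fun m hm => ?_
    rw [if_pos (by simpa [Nat.lt_succ_iff] using hm)]
  rw [h1, h2, h3, h4]

-- Fin.le is by val
example {N : ℕ} (i k : Fin N) : (i ≤ k) ↔ (i.1 ≤ k.1) := Fin.le_def

/-- extension of `l ∘ π` to ℕ by zero -/
def ext {N : ℕ} (π : Equiv.Perm (Fin N)) (l : Fin N → ℝ) (m : ℕ) : ℝ :=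
  if h : m < N then l (π ⟨m, h⟩) else 0

lemma real_key2 {N : ℕ} (π : Equiv.Perm (Fin N)) (l x : Fin N → ℝ) :
    ∑ k : Fin N, ((k.1+1:ℝ) * (l (π k) - ext π l (k.1+1)))
        * ((k.1+1:ℝ)⁻¹ * ∑ i ∈ Finset.univ.filter (· ≤ k), x (π i))
      = ∑ j, l j * x j := by
  classical
  have hterm : ∀ k : Fin N,
      ((k.1+1:ℝ) * (l (π k) - ext π l (k.1+1)))
          * ((k.1+1:ℝ)⁻¹ * ∑ i ∈ Finset.univ.filter (· ≤ k), x (π i))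
        = (ext π l k.1 - ext π l (k.1+1)) * ∑ i ∈ Finset.range (k.1+1), ext π x i := by
    intro k
    have hne : ((k.1:ℝ)+1) ≠ 0 := by positivity
    have h1 : ext π l k.1 = l (π k) := by simp [ext, k.2]
    have h2 : ∑ i ∈ Finset.univ.filter (· ≤ k), x (π i)
        = ∑ i ∈ Finset.range (k.1+1), ext π x i := by
      refine sum_filter_le k (fun i => x (π i)) _ fun i => ?_
      simp [ext, i.2]
    rw [h1, h2]
    field_simp
  rw [Finset.sum_congr rfl fun k _ => hterm k]
  have h5 : ∑ k : Fin N, (ext π l k.1 - ext π l (k.1+1)) * ∑ i ∈ Finset.range (k.1+1), ext π x i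
      = ∑ k ∈ Finset.range N, (ext π l k - ext π l (k+1)) * ∑ i ∈ Finset.range (k+1), ext π x i :=
    Fin.sum_univ_eq_sum_range
      (fun k => (ext π l k - ext π l (k+1)) * ∑ i ∈ Finset.range (k+1), ext π x i) N
  rw [h5, abel_aux]
  have h6 : ext π l N = 0 := by simp [ext]
  rw [h6, zero_mul, sub_zero]
  have h7 : ∑ k ∈ Finset.range N, ext π l k * ext π x k
      = ∑ k : Fin N, l (π k) * x (π k) := by
    rw [← Fin.sum_univ_eq_sum_range (fun k => ext π l k * ext π x k) N]
    refine Finset.sum_congr rfl fun k _ => ?_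
    simp [ext, k.2]
  rw [h7]
  exact Equiv.sum_comp π fun j => l j * x j

lemma real_key3 {N : ℕ} (π : Equiv.Perm (Fin N)) (l : Fin N → ℝ) :
    ∑ k : Fin N, (k.1+1:ℝ) * (l (π k) - ext π l (k.1+1)) = ∑ j, l j := by
  have := real_key2 π l (fun _ => 1)
  have hcard : ∀ k : Fin N, ∑ i ∈ Finset.univ.filter (· ≤ k), (fun _ => (1:ℝ)) (π i)
      = (k.1+1 : ℝ) := by
    intro k
    rw [sum_filter_le k _ (fun _ => (1:ℝ)) (fun _ => rfl)]
    simp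
  rw [Finset.sum_congr rfl fun k _ => by rw [hcard k]] at this
  have hterm : ∀ k : Fin N, ((k.1+1:ℝ) * (l (π k) - ext π l (k.1+1))) * ((k.1+1:ℝ)⁻¹ * (k.1+1:ℝ))
      = (k.1+1:ℝ) * (l (π k) - ext π l (k.1+1)) := by
    intro k
    have hne : ((k.1:ℝ)+1) ≠ 0 := by positivity
    field_simp
  rw [Finset.sum_congr rfl fun k _ => hterm k] at this
  simpa using this

lemma real_key1 {N : ℕ} (π : Equiv.Perm (Fin N)) (m x : Fin N → ℝ) :
    ∑ j, (∑ k ∈ Finset.univ.filter (fun k => π.symm j ≤ k), (k.1+1:ℝ)⁻¹ * m k) * x j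
      = ∑ k, m k * ((k.1+1:ℝ)⁻¹ * ∑ i ∈ Finset.univ.filter (· ≤ k), x (π i)) := by
  classical
  have lhs : ∑ j, (∑ k ∈ Finset.univ.filter (fun k => π.symm j ≤ k), (k.1+1:ℝ)⁻¹ * m k) * x j
      = ∑ j, ∑ k : Fin N, (if π.symm j ≤ k then (k.1+1:ℝ)⁻¹ * m k * x j else 0) := by
    refine Finset.sum_congr rfl fun j _ => ?_
    rw [Finset.sum_filter, Finset.sum_mul]
    refine Finset.sum_congr rfl fun k _ => ?_
    by_cases h : π.symm j ≤ k <;> simp [h]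
  rw [lhs, Finset.sum_comm]
  refine Finset.sum_congr rfl fun k _ => ?_
  have step : ∑ j, (if π.symm j ≤ k then (k.1+1:ℝ)⁻¹ * m k * x j else 0)
      = ∑ i, (if i ≤ k then (k.1+1:ℝ)⁻¹ * m k * x (π i) else 0) := by
    rw [← Equiv.sum_comp π (fun j => if π.symm j ≤ k then (k.1+1:ℝ)⁻¹ * m k * x j else 0)]
    refine Finset.sum_congr rfl fun i _ => ?_
    rw [Equiv.symm_apply_apply]
  rw [step, ← Finset.sum_filter, ← Finset.mul_sum]
  ring

lemma real_key1_sum {N : ℕ} (π : Equiv.Perm (Fin N)) (m : Fin N → ℝ) :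
    ∑ j, (∑ k ∈ Finset.univ.filter (fun k => π.symm j ≤ k), (k.1+1:ℝ)⁻¹ * m k) = ∑ k, m k := by
  have h := real_key1 π m (fun _ => 1)
  simp only [mul_one] at h
  rw [h]
  refine Finset.sum_congr rfl fun k _ => ?_
  rw [sum_filter_le k (fun _ => (1:ℝ)) (fun _ => (1:ℝ)) (fun _ => rfl)]
  have hne : ((k.1:ℝ)+1) ≠ 0 := by positivity
  simp only [Finset.sum_const, Finset.card_range, nsmul_eq_mul, mul_one]
  push_cast
  field_simp

section MainLemmas
variable {Ω : Type*} [MeasurableSpace Ω] {P : MeasureTheory.Measure Ω}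

lemma bary_apply {d N : ℕ} (X : Fin N → Fin d → L0 P) (π : Equiv.Perm (Fin N))
    (k : Fin N) (r : Fin d) :
    L0.bary P X π k r = ((k.1+1:ℝ)⁻¹) • (∑ i ∈ Finset.univ.filter (· ≤ k), X (π i) r) := by
  simp only [L0.bary, Pi.smul_apply, Finset.sum_apply]

lemma aeBary {d N : ℕ} (X : Fin N → Fin d → L0 P) (π : Equiv.Perm (Fin N)) (r : Fin d) :
    ∀ᵐ ω ∂P, ∀ k : Fin N,
      (L0.bary P X π k r) ω = (k.1+1:ℝ)⁻¹ * ∑ i ∈ Finset.univ.filter (· ≤ k), (X (π i) r) ω := by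
  refine ae_all_iff.2 fun k => ?_
  rw [bary_apply]
  filter_upwards [aeSmul ((k.1+1:ℝ)⁻¹) (∑ i ∈ Finset.univ.filter (· ≤ k), X (π i) r),
    aeSum (Finset.univ.filter (· ≤ k)) (fun i => X (π i) r)] with ω h1 h2
  rw [h1, h2]

lemma comb_apply {d N : ℕ} (lam : Fin N → L0 P) (X : Fin N → Fin d → L0 P) (r : Fin d) :
    (∑ j, lam j • X j) r = ∑ j, lam j * X j r := by
  rw [Finset.sum_apply]
  exact Finset.sum_congr rfl fun j _ => by rw [Pi.smul_apply, smul_eq_mul]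

lemma bary_conv_subset {d N : ℕ} (X : Fin N → Fin d → L0 P) (π : Equiv.Perm (Fin N)) :
    L0.conv P (L0.bary P X π) ⊆ L0.conv P X := by
  classical
  rintro V ⟨μ, hμ0, hμ1, hV⟩
  set ν : Fin N → L0 P :=
    fun j => ∑ k ∈ Finset.univ.filter (fun k => π.symm j ≤ k), ((k.1+1:ℝ)⁻¹) • μ k with hνdef
  have hμ0' : ∀ᵐ ω ∂P, ∀ k, 0 ≤ μ k ω := ae_all_iff.2 fun k => by
    filter_upwards [le_iff.1 (hμ0 k), aeZero] with ω h1 h2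
    rw [h2] at h1; exact h1
  have hsmul : ∀ᵐ ω ∂P, ∀ k : Fin N, (((k.1+1:ℝ)⁻¹) • μ k) ω = (k.1+1:ℝ)⁻¹ * μ k ω :=
    ae_all_iff.2 fun k => aeSmul _ _
  have hν : ∀ᵐ ω ∂P, ∀ j,
      (ν j) ω = ∑ k ∈ Finset.univ.filter (fun k => π.symm j ≤ k), (k.1+1:ℝ)⁻¹ * μ k ω :=
    ae_all_iff.2 fun j => by
      filter_upwards [aeSum (Finset.univ.filter (fun k => π.symm j ≤ k))
        (fun k => ((k.1+1:ℝ)⁻¹) • μ k), hsmul] with ω h1 h2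
      rw [h1]
      exact Finset.sum_congr rfl fun k _ => h2 k
  have hμ1' : ∀ᵐ ω ∂P, ∑ k, μ k ω = 1 := by
    filter_upwards [eq_iff.1 hμ1, aeSum Finset.univ μ, aeOne] with ω h1 h2 h3
    rw [← h2, h1, h3]
  refine ⟨ν, ?_, ?_, ?_⟩
  · intro j
    rw [le_iff]
    filter_upwards [aeZero, hν, hμ0'] with ω h0 h1 h2
    rw [h0, h1 j]
    exact Finset.sum_nonneg fun k _ => mul_nonneg (by positivity) (h2 k)
  · rw [eq_iff]
    filter_upwards [aeSum Finset.univ ν, hν, hμ1', aeOne] with ω h1 h2 h3 h4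
    rw [h1, h4, Finset.sum_congr rfl fun j _ => h2 j, real_key1_sum π (fun k => μ k ω), h3]
  · funext r
    rw [eq_iff]
    have hVr : V r = ∑ k, μ k * (L0.bary P X π k r) := by
      rw [hV]; exact comb_apply μ (L0.bary P X π) r
    filter_upwards [eq_iff.1 hVr, aeSum Finset.univ (fun k => μ k * L0.bary P X π k r),
      ae_all_iff.2 fun k => aeMul (μ k) (L0.bary P X π k r), aeBary X π r,
      eq_iff.1 (comb_apply ν X r), aeSum Finset.univ (fun j => ν j * X j r),
      ae_all_iff.2 fun j => aeMul (ν j) (X j r), hν]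
      with ω h1 h2 h3 h4 h5 h6 h7 h8
    rw [h1, h2, h5, h6]
    have lhs : ∑ k, (μ k * L0.bary P X π k r) ω
        = ∑ k, μ k ω * ((k.1+1:ℝ)⁻¹ * ∑ i ∈ Finset.univ.filter (· ≤ k), (X (π i) r) ω) :=
      Finset.sum_congr rfl fun k _ => by rw [h3 k, h4 k]
    have rhs : ∑ j, (ν j * X j r) ω
        = ∑ j, (∑ k ∈ Finset.univ.filter (fun k => π.symm j ≤ k), (k.1+1:ℝ)⁻¹ * μ k ω)
            * (X j r) ω :=
      Finset.sum_congr rfl fun j _ => by rw [h7 j, h8 j]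
    rw [lhs, rhs]
    exact (real_key1 π (fun k => μ k ω) (fun j => (X j r) ω)).symm

lemma glue_conv {d N : ℕ} [MeasureTheory.IsProbabilityMeasure P] (X : Fin N → Fin d → L0 P)
    {A : ℕ → Set Ω} (hA : L0.IsPartition P A) {W : ℕ → Fin d → L0 P}
    (hW : ∀ i, W i ∈ L0.conv P X) {Z : Fin d → L0 P}
    (hglue : L0.IsGluing P A W Z) : Z ∈ L0.conv P X := by
  classical
  choose lam hlam0 hlam1 hlamW using hW
  have hg : ∀ j : Fin N, ∃ g : L0 P, L0.IsGluing1 P A (fun i => lam i j) g :=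
    fun j => exists_glue hA (fun i => lam i j)
  choose g hgl using hg
  have hgae : ∀ j i, ∀ᵐ ω ∂P, ω ∈ A i → (g j) ω = (lam i j) ω :=
    fun j i => (ind_mul_eq_iff (hA.meas i)).1 (hgl j i)
  refine ⟨g, ?_, ?_, ?_⟩
  · intro j
    rw [le_iff]
    refine ae_partition hA (p := fun ω => (0 : L0 P) ω ≤ (g j) ω) fun i => ?_
    filter_upwards [hgae j i, le_iff.1 (hlam0 i j)] with ω h1 h2 hmem
    rw [h1 hmem]; exact h2
  · rw [eq_iff]
    refine ae_partition hA (p := fun ω => (∑ j, g j) ω = (1 : L0 P) ω) fun i => ?_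
    filter_upwards [aeSum Finset.univ g, ae_all_iff.2 fun j => hgae j i,
      eq_iff.1 (hlam1 i), aeSum Finset.univ (lam i)] with ω h1 h2 h3 h4 hmem
    rw [h1, Finset.sum_congr rfl fun j _ => h2 j hmem, ← h4, h3]
  · funext r
    rw [eq_iff]
    refine ae_partition hA (p := fun ω => (Z r) ω = ((∑ j, g j • X j) r) ω) fun i => ?_
    have hWr : W i r = ∑ j, lam i j * X j r := by
      rw [hlamW i]; exact comb_apply (lam i) X r
    filter_upwards [(ind_mul_eq_iff (hA.meas i)).1 (hglue r i),
      eq_iff.1 hWr, aeSum Finset.univ (fun j => lam i j * X j r),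
      ae_all_iff.2 fun j => aeMul (lam i j) (X j r),
      eq_iff.1 (comb_apply g X r), aeSum Finset.univ (fun j => g j * X j r),
      ae_all_iff.2 fun j => aeMul (g j) (X j r),
      ae_all_iff.2 fun j => hgae j i] with ω h1 h2 h3 h4 h5 h6 h7 h8 hmem
    rw [h1 hmem, h2, h3, h5, h6]
    exact Finset.sum_congr rfl fun j _ => by rw [h4 j, h7 j, h8 j hmem]

/-- successor coefficient `λ_{π(k+1)}` extended by `0`. -/
def lnextD {N : ℕ} (lam : Fin N → L0 P) (π : Equiv.Perm (Fin N)) (k : Fin N) : L0 P :=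
  if h : k.1 + 1 < N then lam (π ⟨k.1 + 1, h⟩) else 0

/-- the barycentric coefficient `μ_k = (k+1)(λ_{π(k)} - λ_{π(k+1)})`. -/
def muD {N : ℕ} (lam : Fin N → L0 P) (π : Equiv.Perm (Fin N)) (k : Fin N) : L0 P :=
  ((k.1 + 1 : ℝ)) • (lam (π k) - lnextD lam π k)

lemma mu_ae {N : ℕ} (lam : Fin N → L0 P) (π : Equiv.Perm (Fin N)) :
    ∀ᵐ ω ∂P, ∀ k : Fin N,
      (muD lam π k) ω
        = (k.1 + 1 : ℝ) * ((lam (π k)) ω - ext π (fun j => (lam j) ω) (k.1 + 1)) := by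
  refine ae_all_iff.2 fun k => ?_
  have h0 : ∀ᵐ ω ∂P, (lnextD lam π k) ω = ext π (fun j => (lam j) ω) (k.1 + 1) := by
    by_cases h : k.1 + 1 < N
    · refine Filter.Eventually.of_forall fun ω => ?_
      simp only [lnextD, ext, dif_pos h]
    · simp only [lnextD, ext, dif_neg h]
      exact aeZero
  filter_upwards [aeSmul ((k.1 + 1 : ℝ)) (lam (π k) - lnextD lam π k),
    aeSub (lam (π k)) (lnextD lam π k), h0] with ω h1 h2 h3
  rw [muD, h1, h2, h3]

lemma W_mem {d N : ℕ} (hN : 0 < N) (X : Fin N → Fin d → L0 P) (Z : Fin d → L0 P)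
    (lam : Fin N → L0 P) (hlam0 : ∀ j, 0 ≤ lam j) (hlam1 : (∑ j, lam j) = 1)
    (hZ : Z = ∑ j, lam j • X j) (π : Equiv.Perm (Fin N)) (S : Set Ω) (hS : MeasurableSet S)
    (hSsub : ∀ ω ∈ S, ∀ i j : Fin N, i ≤ j → (lam (π j)) ω ≤ (lam (π i)) ω) :
    (L0.ind P S) • Z + (1 - L0.ind P S) • (L0.bary P X π ⟨N - 1, by omega⟩)
      ∈ L0.conv P (L0.bary P X π) := by
  classical
  set klast : Fin N := ⟨N - 1, by omega⟩ with hklast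
  set ν : Fin N → L0 P := fun k =>
    L0.ind P S * muD lam π k + (if k = klast then 1 - L0.ind P S else 0) with hν
  have hlam0' : ∀ᵐ ω ∂P, ∀ j, 0 ≤ (lam j) ω := ae_all_iff.2 fun j => by
    filter_upwards [le_iff.1 (hlam0 j), aeZero] with ω h1 h2
    rw [h2] at h1; exact h1
  have hlam1' : ∀ᵐ ω ∂P, ∑ j, (lam j) ω = 1 := by
    filter_upwards [eq_iff.1 hlam1, aeSum Finset.univ lam, aeOne] with ω h1 h2 h3
    rw [← h2, h1, h3]
  have hνae : ∀ᵐ ω ∂P, ∀ k : Fin N,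
      (ν k) ω = (L0.ind P S) ω * (muD lam π k) ω
        + (if k = klast then 1 - (L0.ind P S) ω else 0) := by
    refine ae_all_iff.2 fun k => ?_
    by_cases h : k = klast
    · filter_upwards [aeAdd (L0.ind P S * muD lam π k) (1 - L0.ind P S),
        aeMul (L0.ind P S) (muD lam π k), aeSub (1 : L0 P) (L0.ind P S), aeOne] with ω h1 h2 h3 h4
      rw [hν]; simp only [if_pos h]
      rw [h1, h2, h3, h4]
    · filter_upwards [aeAdd (L0.ind P S * muD lam π k) 0,
        aeMul (L0.ind P S) (muD lam π k), aeZero] with ω h1 h2 h3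
      rw [hν]; simp only [if_neg h]
      rw [h1, h2, h3]
  have hmuval : ∀ᵐ ω ∂P, ω ∈ S → ∀ k : Fin N, 0 ≤ (muD lam π k) ω := by
    filter_upwards [mu_ae lam π, hlam0'] with ω h1 h2 hmem k
    rw [h1 k]
    refine mul_nonneg (by positivity) (sub_nonneg.2 ?_)
    by_cases h : k.1 + 1 < N
    · rw [ext, dif_pos h]
      exact hSsub ω hmem k ⟨k.1 + 1, h⟩ (Fin.le_def.2 (Nat.le_succ k.1))
    · rw [ext, dif_neg h]
      exact h2 (π k)
  refine ⟨ν, ?_, ?_, ?_⟩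
  · intro k
    rw [le_iff]
    filter_upwards [aeZero, hνae, hmuval, aeInd hS] with ω h0 h1 h2 h3
    rw [h0, h1 k, h3]
    by_cases hmem : ω ∈ S
    · rw [Set.indicator_of_mem hmem, one_mul]
      have := h2 hmem k
      split <;> simp [this]
    · rw [Set.indicator_of_notMem hmem, zero_mul, zero_add]
      split <;> norm_num
  · rw [eq_iff]
    filter_upwards [aeSum Finset.univ ν, hνae, aeInd hS, mu_ae lam π, hlam1', aeOne]
      with ω h1 h2 h3 h4 h5 h6
    rw [h1, h6, Finset.sum_congr rfl fun k _ => h2 k, Finset.sum_add_distrib,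
        ← Finset.mul_sum, Finset.sum_ite_eq' Finset.univ klast
          (fun _ => 1 - (L0.ind P S) ω)]
    have : ∑ k, (muD lam π k) ω = 1 := by
      rw [Finset.sum_congr rfl fun k _ => h4 k, real_key3 π (fun j => (lam j) ω), h5]
    rw [this]
    simp
  · funext r
    have hlhs : ((L0.ind P S) • Z + (1 - L0.ind P S) • (L0.bary P X π klast)) r
        = L0.ind P S * Z r + (1 - L0.ind P S) * (L0.bary P X π klast r) := by
      simp only [Pi.add_apply, Pi.smul_apply, smul_eq_mul]
    have hZr : Z r = ∑ j, lam j * X j r := by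
      rw [hZ]; exact comb_apply lam X r
    rw [eq_iff, hlhs]
    filter_upwards [aeAdd (L0.ind P S * Z r) ((1 - L0.ind P S) * (L0.bary P X π klast r)),
      aeMul (L0.ind P S) (Z r), aeMul (1 - L0.ind P S) (L0.bary P X π klast r),
      aeSub (1 : L0 P) (L0.ind P S), aeOne, eq_iff.1 hZr,
      aeSum Finset.univ (fun j => lam j * X j r),
      ae_all_iff.2 fun j => aeMul (lam j) (X j r),
      aeBary X π r, eq_iff.1 (comb_apply ν (L0.bary P X π) r),
      aeSum Finset.univ (fun k => ν k * L0.bary P X π k r),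
      ae_all_iff.2 fun k => aeMul (ν k) (L0.bary P X π k r),
      hνae, mu_ae lam π, aeInd hS]
      with ω h1 h2 h3 h4 h5 h6 h7 h8 h9 h10 h11 h12 h13 h14 h15
    rw [h1, h2, h3, h4, h5, h10, h11]
    have hZval : (Z r) ω = ∑ j, (lam j) ω * (X j r) ω := by
      rw [h6, h7]
      exact Finset.sum_congr rfl fun j _ => h8 j
    have hrhs : ∑ k, (ν k * L0.bary P X π k r) ω
        = ∑ k, ((L0.ind P S) ω * (muD lam π k) ω
            + (if k = klast then 1 - (L0.ind P S) ω else 0)) * ((L0.bary P X π k r) ω) :=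
      Finset.sum_congr rfl fun k _ => by rw [h12 k, h13 k]
    rw [hZval, hrhs]
    have hsplit : ∑ k, ((L0.ind P S) ω * (muD lam π k) ω
            + (if k = klast then 1 - (L0.ind P S) ω else 0)) * ((L0.bary P X π k r) ω)
        = (L0.ind P S) ω * (∑ k, (muD lam π k) ω * (L0.bary P X π k r) ω)
          + (1 - (L0.ind P S) ω) * ((L0.bary P X π klast r) ω) := by
      rw [Finset.sum_congr rfl (fun k _ => add_mul _ _ _), Finset.sum_add_distrib]
      congr 1
      · rw [Finset.mul_sum]
        exact Finset.sum_congr rfl fun k _ => by ring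
      · rw [Finset.sum_congr rfl (fun k _ => ite_mul (k = klast) _ 0 _),
            Finset.sum_congr rfl (fun k _ => by rw [zero_mul]),
            Finset.sum_ite_eq' Finset.univ klast]
        simp
    rw [hsplit]
    have hmain : ∑ k, (muD lam π k) ω * (L0.bary P X π k r) ω
        = ∑ j, (lam j) ω * (X j r) ω := by
      have : ∀ k : Fin N, (muD lam π k) ω * (L0.bary P X π k r) ω
          = ((k.1 + 1 : ℝ) * ((fun j => (lam j) ω) (π k) - ext π (fun j => (lam j) ω) (k.1+1)))
            * ((k.1+1:ℝ)⁻¹ * ∑ i ∈ Finset.univ.filter (· ≤ k), (fun j => (X j r) ω) (π i)) := by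
        intro k
        rw [h14 k, h9 k]
      rw [Finset.sum_congr rfl fun k _ => this k]
      exact real_key2 π (fun j => (lam j) ω) (fun j => (X j r) ω)
    rw [hmain]

lemma conv_subset_sigma {d N : ℕ} [MeasureTheory.IsProbabilityMeasure P] (hN : 0 < N)
    (X : Fin N → Fin d → L0 P) :
    L0.conv P X ⊆ L0.sigmaHull P (⋃ π : Equiv.Perm (Fin N), L0.conv P (L0.bary P X π)) := by
  classical
  rintro Z ⟨lam, hlam0, hlam1, hZ⟩
  set B : Equiv.Perm (Fin N) → Set Ω :=
    fun π => {ω | ∀ i j : Fin N, i ≤ j → (lam (π j)) ω ≤ (lam (π i)) ω} with hB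
  have hBmeas : ∀ π, MeasurableSet (B π) := by
    intro π
    have hre : B π = ⋂ i, ⋂ j, {ω | i ≤ j → (lam (π j)) ω ≤ (lam (π i)) ω} := by
      ext ω; simp only [hB, Set.mem_iInter, Set.mem_setOf_eq]
    rw [hre]
    refine MeasurableSet.iInter fun i => MeasurableSet.iInter fun j => ?_
    by_cases hij : i ≤ j
    · have he : {ω | i ≤ j → (lam (π j)) ω ≤ (lam (π i)) ω}
          = {ω | (lam (π j)) ω ≤ (lam (π i)) ω} := by
        ext ω; simp [hij]
      rw [he]
      exact measurableSet_le (lam (π j)).measurable (lam (π i)).measurable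
    · have he : {ω | i ≤ j → (lam (π j)) ω ≤ (lam (π i)) ω} = Set.univ := by
        ext ω; simp [hij]
      rw [he]; exact MeasurableSet.univ
  have hBcover : ∀ ω, ∃ π, ω ∈ B π := by
    intro ω
    refine ⟨Tuple.sort (fun i => -((lam i) ω)), fun i j hij => ?_⟩
    have := Tuple.monotone_sort (fun i => -((lam i) ω)) hij
    simpa using this
  obtain ⟨e', he'⟩ : ∃ e' : ℕ → Equiv.Perm (Fin N), ∀ π, ∃ n, e' n = π := by
    set g := Fintype.equivFin (Equiv.Perm (Fin N)) with hg
    refine ⟨fun n => if h : n < Fintype.card (Equiv.Perm (Fin N)) then g.symm ⟨n, h⟩ else 1,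
      fun π => ⟨(g π).1, ?_⟩⟩
    have hlt : ((g π).1 : ℕ) < Fintype.card (Equiv.Perm (Fin N)) := (g π).2
    simp only [dif_pos hlt, Fin.eta, Equiv.symm_apply_apply]
  set A : ℕ → Set Ω := fun n => B (e' n) \ ⋃ (m : ℕ) (_ : m < n), B (e' m) with hA
  have hAsub : ∀ n, A n ⊆ B (e' n) := fun n => Set.diff_subset
  have hAdisj' : ∀ m n, m < n → A m ∩ A n = ∅ := by
    intro m n hmn
    ext ω
    simp only [Set.mem_inter_iff, Set.mem_empty_iff_false, iff_false, not_and]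
    intro h1 h2
    exact h2.2 (Set.mem_iUnion.2 ⟨m, Set.mem_iUnion.2 ⟨hmn, h1.1⟩⟩)
  have hApart : L0.IsPartition P A := by
    refine ⟨fun n => (hBmeas _).diff
      (MeasurableSet.iUnion fun m => MeasurableSet.iUnion fun _ => hBmeas _), ?_, ?_⟩
    · intro i j hij
      rcases lt_or_gt_of_ne hij with h | h
      · rw [hAdisj' i j h]; exact measure_empty
      · rw [Set.inter_comm, hAdisj' j i h]; exact measure_empty
    · have huniv : ⋃ n, A n = Set.univ := by
        refine Set.eq_univ_of_forall fun ω => ?_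
        obtain ⟨π, hπ⟩ := hBcover ω
        obtain ⟨n, hn⟩ := he' π
        have hex : ∃ m, ω ∈ B (e' m) := ⟨n, hn ▸ hπ⟩
        refine Set.mem_iUnion.2 ⟨Nat.find hex, Nat.find_spec hex, ?_⟩
        intro hc
        obtain ⟨m, hm⟩ := Set.mem_iUnion.1 hc
        obtain ⟨hmlt, hmB⟩ := Set.mem_iUnion.1 hm
        exact Nat.find_min hex hmlt hmB
      rw [huniv]
      exact measure_univ
  refine ⟨A, fun n => (L0.ind P (A n)) • Z
    + (1 - L0.ind P (A n)) • (L0.bary P X (e' n) ⟨N - 1, by omega⟩), hApart, ?_, ?_⟩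
  · intro n
    refine Set.mem_iUnion.2 ⟨e' n, ?_⟩
    refine W_mem hN X Z lam hlam0 hlam1 hZ (e' n) (A n) (hApart.meas n) ?_
    intro ω hω i j hij
    exact hAsub n hω i j hij
  · intro r i
    rw [ind_mul_eq_iff (hApart.meas i)]
    have happ : ((L0.ind P (A i)) • Z
        + (1 - L0.ind P (A i)) • (L0.bary P X (e' i) ⟨N - 1, by omega⟩)) r
        = L0.ind P (A i) * Z r
          + (1 - L0.ind P (A i)) * (L0.bary P X (e' i) ⟨N - 1, by omega⟩ r) := by
      simp only [Pi.add_apply, Pi.smul_apply, smul_eq_mul]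
    have hfin : ∀ᵐ ω ∂P, ω ∈ A i → (Z r) ω
        = (((L0.ind P (A i)) • Z
            + (1 - L0.ind P (A i)) • (L0.bary P X (e' i) ⟨N - 1, by omega⟩)) r) ω := by
      rw [happ]
      filter_upwards [aeAdd (L0.ind P (A i) * Z r)
          ((1 - L0.ind P (A i)) * (L0.bary P X (e' i) ⟨N - 1, by omega⟩ r)),
        aeMul (L0.ind P (A i)) (Z r),
        aeMul (1 - L0.ind P (A i)) (L0.bary P X (e' i) ⟨N - 1, by omega⟩ r),
        aeSub (1 : L0 P) (L0.ind P (A i)), aeOne, aeInd (hApart.meas i)]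
        with ω h1 h2 h3 h4 h5 h6 hmem
      rw [h1, h2, h3, h4, h5, h6, Set.indicator_of_mem hmem]
      ring
    exact hfin

end MainLemmas

end StmtAux
end StmtAuxSection

open MeasureTheory in
/-- the σ-stable hull of the union of the barycentric subdivision of a
conditional simplex is the simplex itself. -/
theorem stmt_7 {Ω : Type*} [MeasurableSpace Ω] (P : Measure Ω) [IsProbabilityMeasure P]
    {d N : ℕ} (X : Fin N → Fin d → L0 P) (hX : L0.AffInd P X) :
    L0.sigmaHull P (⋃ π : Equiv.Perm (Fin N), L0.conv P (L0.bary P X π)) = L0.conv P X := by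
  cases N with
  | zero => exact hX.elim
  | succ m =>
    refine Set.Subset.antisymm ?_ (StmtAux.conv_subset_sigma (Nat.succ_pos m) X)
    rintro Z ⟨A, W, hA, hW, hglue⟩
    refine StmtAux.glue_conv X hA (fun i => ?_) hglue
    obtain ⟨π, hmem⟩ := Set.mem_iUnion.1 (hW i)
    exact StmtAux.bary_conv_subset X π hmem
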